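/- Let Γ be a finite set and Q a nonempty subset of the Euclidean space ℝ^Γ. If a point e lies in the closed convex hull of Q, then there is no point e* ∈ ℝ^Γ such that for all q ∈ Q, dist(q, e*) < dist(q, e). -/

import Mathlib

open RealInnerProductSpace


/-- In Euclidean space `ℝ^Γ` (Γ finite), if `e` lies in the closed convex
hull of a nonempty `Q`, then no point `e*` is strictly closer than `e` to every `q ∈ Q`. -/
theorem stmt2 {Γ : Type*} [Fintype Γ] (Q : Set (EuclideanSpace ℝ Γ)) (hQ : Q.Nonempty)
    (e : EuclideanSpace ℝ Γ) (he : e ∈ closure (convexHull ℝ Q)) :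
    ¬ ∃ estar : EuclideanSpace ℝ Γ, ∀ q ∈ Q, dist q estar < dist q e := by
  rintro ⟨es, hes⟩
  set v : EuclideanSpace ℝ Γ := e - es with hv
  set r : ℝ := (‖e‖ ^ 2 - ‖es‖ ^ 2) / 2 with hr
  have hS : closure (convexHull ℝ Q) ⊆ {x | ((inner ℝ v x : ℝ)) ≤ r} := by
    apply closure_minimal
    · apply convexHull_min
      · intro q hq
        have h := hes q hq
        rw [dist_eq_norm, dist_eq_norm] at h
        have h2 : ‖q - es‖ ^ 2 < ‖q - e‖ ^ 2 := by
          have h1 : (0:ℝ) ≤ ‖q - es‖ := norm_nonneg _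
          nlinarith
        rw [norm_sub_sq_real, norm_sub_sq_real] at h2
        simp only [Set.mem_setOf_eq, hv, inner_sub_left]
        have hsym1 : ((inner ℝ e q : ℝ)) = ((inner ℝ q e : ℝ)) := real_inner_comm _ _
        have hsym2 : ((inner ℝ es q : ℝ)) = ((inner ℝ q es : ℝ)) := real_inner_comm _ _
        rw [hsym1, hsym2, hr]
        linarith
      · exact convex_halfSpace_le (IsLinearMap.mk (fun x y => inner_add_right v x y)
          (fun c x => real_inner_smul_right v x c)) r
    · exact isClosed_le (continuous_const.inner continuous_id) continuous_const
  have hle : ((inner ℝ v e : ℝ)) ≤ r := hS he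
  have hee : e = es := by
    have hsq : ‖e - es‖ ^ 2 ≤ 0 := by
      rw [norm_sub_sq_real]
      simp only [hv, inner_sub_left, hr] at hle
      have : ((inner ℝ es e : ℝ)) = ((inner ℝ e es : ℝ)) := real_inner_comm _ _
      have he2 : ((inner ℝ e e : ℝ)) = ‖e‖ ^ 2 := real_inner_self_eq_norm_sq e
      linarith
    have := sq_nonneg ‖e - es‖
    have : ‖e - es‖ = 0 := by nlinarith
    rwa [norm_sub_eq_zero_iff] at this
  obtain ⟨q, hq⟩ := hQ
  exact lt_irrefl _ (hee ▸ hes q hq)
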